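/- Consider the directed formation in ℝ² with four agents at p_1 = (−1,1), p_2 = (1,1), p_3 = (1,−1), p_4 = (−1,−1) and directed edge set E = {(1,4), (1,2), (2,3), (2,4), (3,4)}. Then Null(L_B) = span{𝟏⊗I_2, p}; that is, every x ∈ ℝ⁸ with L_B x = 0 is of the form x = c • p + (v, v, v, v) for some c ∈ ℝ and v ∈ ℝ². In particular this formation is both infinitesimally bearing rigid and bearing persistent. -/

import Mathlib

open scoped InnerProductSpace

/-- The orthogonal projection matrix `P_x = I − x xᵀ/‖x‖²` onto the orthogonal
complement of a nonzero vector `x ∈ ℝᵈ`, as a linear map. -/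
noncomputable def projP {d : ℕ} (x : EuclideanSpace ℝ (Fin d)) :
    EuclideanSpace ℝ (Fin d) →ₗ[ℝ] EuclideanSpace ℝ (Fin d) :=
  LinearMap.id - (‖x‖ ^ 2)⁻¹ • ((innerSL ℝ x).toLinearMap.smulRight x)

/-- The linear map sending a configuration `x = (x_1, …, x_n)` to `x_j − x_i`. -/
noncomputable def relpos {d n : ℕ} (i j : Fin n) :
    (Fin n → EuclideanSpace ℝ (Fin d)) →ₗ[ℝ] EuclideanSpace ℝ (Fin d) :=
  LinearMap.proj (R := ℝ) (φ := fun _ : Fin n => EuclideanSpace ℝ (Fin d)) j -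
    LinearMap.proj (R := ℝ) (φ := fun _ : Fin n => EuclideanSpace ℝ (Fin d)) i

/-- The bearing `g_ij = (p_j − p_i)/‖p_j − p_i‖` of edge `(i, j)`. -/
noncomputable def bearing {d n : ℕ} (p : Fin n → EuclideanSpace ℝ (Fin d))
    (i j : Fin n) : EuclideanSpace ℝ (Fin d) :=
  ‖p j - p i‖⁻¹ • (p j - p i)

/-- The bearing rigidity matrix `R_B` of the formation `G(p)`: the linear map
`ℝ^{dn} → ℝ^{d|E|}` whose component for edge `(i,j) ∈ E` is
`(1/‖e_ij‖) P_{g_ij} (x_j − x_i)`. -/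
noncomputable def RB {d n : ℕ} (E : Finset (Fin n × Fin n))
    (p : Fin n → EuclideanSpace ℝ (Fin d)) :
    (Fin n → EuclideanSpace ℝ (Fin d)) →ₗ[ℝ] (↥E → EuclideanSpace ℝ (Fin d)) :=
  LinearMap.pi fun e =>
    ‖p e.1.2 - p e.1.1‖⁻¹ • (projP (bearing p e.1.1 e.1.2) ∘ₗ relpos e.1.1 e.1.2)

/-- The bearing Laplacian `L_B` of the formation `G(p)`: the linear map
`ℝ^{dn} → ℝ^{dn}` whose `i`-th `ℝᵈ`-block is `∑_{j : (i,j) ∈ E} P_{g_ij}(x_i − x_j)`. -/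
noncomputable def LB {d n : ℕ} (E : Finset (Fin n × Fin n))
    (p : Fin n → EuclideanSpace ℝ (Fin d)) :
    (Fin n → EuclideanSpace ℝ (Fin d)) →ₗ[ℝ] (Fin n → EuclideanSpace ℝ (Fin d)) :=
  LinearMap.pi fun i =>
    ∑ j ∈ Finset.univ.filter (fun j => (i, j) ∈ E),
      (projP (bearing p i j) ∘ₗ relpos j i)

/-- The subspace `span{𝟏 ⊗ I_d, p} = {c • p + (v, …, v) : c ∈ ℝ, v ∈ ℝᵈ}` of
translations and scalings of the configuration `p`. -/
def transScale {d n : ℕ} (p : Fin n → EuclideanSpace ℝ (Fin d)) :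
    Set (Fin n → EuclideanSpace ℝ (Fin d)) :=
  {x | ∃ (c : ℝ) (v : EuclideanSpace ℝ (Fin d)), x = c • p + fun _ => v}

/-- The four agents of the unit-square formation:
`p_1 = (−1,1)`, `p_2 = (1,1)`, `p_3 = (1,−1)`, `p_4 = (−1,−1)`. -/
noncomputable def pSquare : Fin 4 → EuclideanSpace ℝ (Fin 2) := fun i =>
  (WithLp.equiv 2 (Fin 2 → ℝ)).symm (![![-1, 1], ![1, 1], ![1, -1], ![-1, -1]] i)

/-- The directed edge set `{(1,4), (1,2), (2,3), (2,4), (3,4)}` (with agents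
indexed `1,…,4` as `0,…,3`). -/
def Ep : Finset (Fin 4 × Fin 4) := {(0, 3), (0, 1), (1, 2), (1, 3), (2, 3)}

-- auxiliary lemmas


lemma projP_apply {d : ℕ} (x y : EuclideanSpace ℝ (Fin d)) :
    projP x y = y - (‖x‖ ^ 2)⁻¹ • (⟪x, y⟫_ℝ • x) := by
  simp only [projP, LinearMap.sub_apply, LinearMap.id_apply, LinearMap.smul_apply,
    LinearMap.smulRight_apply, ContinuousLinearMap.coe_coe, innerSL_apply_apply]

lemma projP_smul {d : ℕ} (c : ℝ) (hc : c ≠ 0) (x : EuclideanSpace ℝ (Fin d)) :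
    projP (c • x) = projP x := by
  ext y
  by_cases hx : x = 0
  · simp [projP_apply, hx]
  have hnx : ‖x‖ ≠ 0 := norm_ne_zero_iff.mpr hx
  simp only [projP_apply, real_inner_smul_left, norm_smul, Real.norm_eq_abs,
    mul_pow, sq_abs, smul_smul]
  field_simp

lemma projP_bearing {d n : ℕ} (p : Fin n → EuclideanSpace ℝ (Fin d)) (i j : Fin n)
    (h : p j ≠ p i) : projP (bearing p i j) = projP (p j - p i) :=
  projP_smul _ (inv_ne_zero (norm_ne_zero_iff.mpr (sub_ne_zero.mpr h))) _

lemma relpos_apply {d n : ℕ} (i j : Fin n) (x : Fin n → EuclideanSpace ℝ (Fin d)) :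
    relpos i j x = x j - x i := rfl

lemma euc_sub (a b : EuclideanSpace ℝ (Fin 2)) (k : Fin 2) : (a - b) k = a k - b k := rfl
lemma euc_add (a b : EuclideanSpace ℝ (Fin 2)) (k : Fin 2) : (a + b) k = a k + b k := rfl
lemma euc_smul (c : ℝ) (a : EuclideanSpace ℝ (Fin 2)) (k : Fin 2) : (c • a) k = c * a k := rfl
lemma euc_ext {a b : EuclideanSpace ℝ (Fin 2)} (h0 : a 0 = b 0) (h1 : a 1 = b 1) : a = b :=
  WithLp.ofLp_injective 2 (funext fun k => by fin_cases k <;> assumption)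

lemma projP_coord (u y : EuclideanSpace ℝ (Fin 2)) (k : Fin 2) :
    projP u y k = y k - (u 0 ^ 2 + u 1 ^ 2)⁻¹ * ((u 0 * y 0 + u 1 * y 1) * u k) := by
  have hn : (‖u‖ : ℝ) ^ 2 = u 0 ^ 2 + u 1 ^ 2 := by
    rw [← real_inner_self_eq_norm_sq]
    simp only [PiLp.inner_apply, Fin.sum_univ_two, sq, RCLike.inner_apply, conj_trivial]
  have hi : ⟪u, y⟫_ℝ = u 0 * y 0 + u 1 * y 1 := by
    simp [PiLp.inner_apply, Fin.sum_univ_two]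
    ring
  rw [projP_apply, hn, hi]; rfl

lemma pS00 : pSquare 0 0 = -1 := rfl
lemma pS01 : pSquare 0 1 = 1 := rfl
lemma pS10 : pSquare 1 0 = 1 := rfl
lemma pS11 : pSquare 1 1 = 1 := rfl
lemma pS20 : pSquare 2 0 = 1 := rfl
lemma pS21 : pSquare 2 1 = -1 := rfl
lemma pS30 : pSquare 3 0 = -1 := rfl
lemma pS31 : pSquare 3 1 = -1 := rfl

lemma ne01 : pSquare 1 ≠ pSquare 0 := by
  intro h; have h0 : (1 : ℝ) = -1 := congrArg (· 0) h; norm_num at h0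
lemma ne03 : pSquare 3 ≠ pSquare 0 := by
  intro h; have h0 : (-1 : ℝ) = 1 := congrArg (· 1) h; norm_num at h0
lemma ne12 : pSquare 2 ≠ pSquare 1 := by
  intro h; have h0 : (-1 : ℝ) = 1 := congrArg (· 1) h; norm_num at h0
lemma ne13 : pSquare 3 ≠ pSquare 1 := by
  intro h; have h0 : (-1 : ℝ) = 1 := congrArg (· 0) h; norm_num at h0
lemma ne23 : pSquare 3 ≠ pSquare 2 := by
  intro h; have h0 : (-1 : ℝ) = 1 := congrArg (· 0) h; norm_num at h0

lemma projP_self {d : ℕ} (c : ℝ) {u : EuclideanSpace ℝ (Fin d)} (hu : u ≠ 0) :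
    projP u (c • u) = 0 := by
  have hn : ‖u‖ ≠ 0 := norm_ne_zero_iff.mpr hu
  rw [projP_apply, real_inner_smul_right, real_inner_self_eq_norm_sq, smul_smul,
    show (‖u‖ ^ 2)⁻¹ * (c * ‖u‖ ^ 2) = c by field_simp, sub_self]

lemma LB_ap0 (x : Fin 4 → EuclideanSpace ℝ (Fin 2)) :
    LB Ep pSquare x 0 =
      projP (pSquare 1 - pSquare 0) (x 0 - x 1) +
        projP (pSquare 3 - pSquare 0) (x 0 - x 3) := by
  simp only [LB, LinearMap.pi_apply]
  rw [show Finset.univ.filter (fun j => ((0 : Fin 4), j) ∈ Ep) = {1, 3} from by decide]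
  rw [Finset.sum_insert (by decide), Finset.sum_singleton]
  simp only [LinearMap.add_apply, LinearMap.comp_apply, relpos_apply,
    projP_bearing _ _ _ ne01, projP_bearing _ _ _ ne03]

lemma LB_ap1 (x : Fin 4 → EuclideanSpace ℝ (Fin 2)) :
    LB Ep pSquare x 1 =
      projP (pSquare 2 - pSquare 1) (x 1 - x 2) +
        projP (pSquare 3 - pSquare 1) (x 1 - x 3) := by
  simp only [LB, LinearMap.pi_apply]
  rw [show Finset.univ.filter (fun j => ((1 : Fin 4), j) ∈ Ep) = {2, 3} from by decide]
  rw [Finset.sum_insert (by decide), Finset.sum_singleton]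
  simp only [LinearMap.add_apply, LinearMap.comp_apply, relpos_apply,
    projP_bearing _ _ _ ne12, projP_bearing _ _ _ ne13]

lemma LB_ap2 (x : Fin 4 → EuclideanSpace ℝ (Fin 2)) :
    LB Ep pSquare x 2 = projP (pSquare 3 - pSquare 2) (x 2 - x 3) := by
  simp only [LB, LinearMap.pi_apply]
  rw [show Finset.univ.filter (fun j => ((2 : Fin 4), j) ∈ Ep) = {3} from by decide]
  rw [Finset.sum_singleton]
  simp only [LinearMap.comp_apply, relpos_apply, projP_bearing _ _ _ ne23]

lemma LB_ap3 (x : Fin 4 → EuclideanSpace ℝ (Fin 2)) :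
    LB Ep pSquare x 3 = 0 := by
  simp only [LB, LinearMap.pi_apply]
  rw [show Finset.univ.filter (fun j => ((3 : Fin 4), j) ∈ Ep) = ∅ from by decide]
  simp

-- hard direction: ker LB ⊆ transScale
lemma dirA (x : Fin 4 → EuclideanSpace ℝ (Fin 2)) (hx : LB Ep pSquare x = 0) :
    x ∈ transScale pSquare := by
  have hb0 : projP (pSquare 1 - pSquare 0) (x 0 - x 1) +
      projP (pSquare 3 - pSquare 0) (x 0 - x 3) = 0 := by
    rw [← LB_ap0]; exact congrFun hx 0
  have hb1 : projP (pSquare 2 - pSquare 1) (x 1 - x 2) +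
      projP (pSquare 3 - pSquare 1) (x 1 - x 3) = 0 := by
    rw [← LB_ap1]; exact congrFun hx 1
  have hb2 : projP (pSquare 3 - pSquare 2) (x 2 - x 3) = 0 := by
    rw [← LB_ap2]; exact congrFun hx 2
  have e00 := congrArg (· 0) hb0
  have e01 := congrArg (· 1) hb0
  have e10 := congrArg (· 0) hb1
  have e11 := congrArg (· 1) hb1
  have e21 := congrArg (· 1) hb2
  simp only [euc_add, projP_coord, euc_sub, pS00, pS01, pS10, pS11, pS20, pS21, pS30, pS31,
    PiLp.zero_apply] at e00 e01 e10 e11 e21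
  norm_num at e00 e01 e10 e11 e21
  refine ⟨(x 1 0 - x 0 0) / 2,
    (WithLp.equiv 2 (Fin 2 → ℝ)).symm ![(x 1 0 + x 0 0) / 2, (x 0 1 + x 3 1) / 2],
    funext fun i => ?_⟩
  have h0 : x 0 = ((x 1 0 - x 0 0) / 2) • pSquare 0 +
      (WithLp.equiv 2 (Fin 2 → ℝ)).symm ![(x 1 0 + x 0 0) / 2, (x 0 1 + x 3 1) / 2] :=
    euc_ext
      (by show x 0 0 = (x 1 0 - x 0 0) / 2 * (-1) + (x 1 0 + x 0 0) / 2; linarith)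
      (by show x 0 1 = (x 1 0 - x 0 0) / 2 * 1 + (x 0 1 + x 3 1) / 2; linarith)
  have h1 : x 1 = ((x 1 0 - x 0 0) / 2) • pSquare 1 +
      (WithLp.equiv 2 (Fin 2 → ℝ)).symm ![(x 1 0 + x 0 0) / 2, (x 0 1 + x 3 1) / 2] :=
    euc_ext
      (by show x 1 0 = (x 1 0 - x 0 0) / 2 * 1 + (x 1 0 + x 0 0) / 2; linarith)
      (by show x 1 1 = (x 1 0 - x 0 0) / 2 * 1 + (x 0 1 + x 3 1) / 2; linarith)
  have h2 : x 2 = ((x 1 0 - x 0 0) / 2) • pSquare 2 +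
      (WithLp.equiv 2 (Fin 2 → ℝ)).symm ![(x 1 0 + x 0 0) / 2, (x 0 1 + x 3 1) / 2] :=
    euc_ext
      (by show x 2 0 = (x 1 0 - x 0 0) / 2 * 1 + (x 1 0 + x 0 0) / 2; linarith)
      (by show x 2 1 = (x 1 0 - x 0 0) / 2 * (-1) + (x 0 1 + x 3 1) / 2; linarith)
  have h3 : x 3 = ((x 1 0 - x 0 0) / 2) • pSquare 3 +
      (WithLp.equiv 2 (Fin 2 → ℝ)).symm ![(x 1 0 + x 0 0) / 2, (x 0 1 + x 3 1) / 2] :=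
    euc_ext
      (by show x 3 0 = (x 1 0 - x 0 0) / 2 * (-1) + (x 1 0 + x 0 0) / 2; linarith)
      (by show x 3 1 = (x 1 0 - x 0 0) / 2 * (-1) + (x 0 1 + x 3 1) / 2; linarith)
  fin_cases i
  · exact h0
  · exact h1
  · exact h2
  · exact h3

-- transScale ⊆ ker RB
lemma dirB (x : Fin 4 → EuclideanSpace ℝ (Fin 2)) (hx : x ∈ transScale pSquare) :
    RB Ep pSquare x = 0 := by
  obtain ⟨c, v, rfl⟩ := hx
  have hdiff : ∀ i j : Fin 4,
      (c • pSquare + fun _ => v : Fin 4 → EuclideanSpace ℝ (Fin 2)) j -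
        (c • pSquare + fun _ => v : Fin 4 → EuclideanSpace ℝ (Fin 2)) i =
        c • (pSquare j - pSquare i) := by
    intro i j
    show (c • pSquare j + v) - (c • pSquare i + v) = c • (pSquare j - pSquare i)
    rw [smul_sub]; abel
  have hmain : ∀ i j : Fin 4, pSquare j ≠ pSquare i →
      (‖pSquare j - pSquare i‖⁻¹ • projP (bearing pSquare i j)
        ((c • pSquare + fun _ => v : Fin 4 → EuclideanSpace ℝ (Fin 2)) j -
          (c • pSquare + fun _ => v : Fin 4 → EuclideanSpace ℝ (Fin 2)) i) :
        EuclideanSpace ℝ (Fin 2)) = 0 := by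
    intro i j hne
    rw [projP_bearing _ _ _ hne, hdiff, projP_self _ (sub_ne_zero.mpr hne), smul_zero]
  funext e
  obtain ⟨ij, he⟩ := e
  fin_cases he
  · exact hmain 0 3 ne03
  · exact hmain 0 1 ne01
  · exact hmain 1 2 ne12
  · exact hmain 1 3 ne13
  · exact hmain 2 3 ne23

-- ker RB ⊆ ker LB
lemma dirC (x : Fin 4 → EuclideanSpace ℝ (Fin 2)) (hR : RB Ep pSquare x = 0) :
    LB Ep pSquare x = 0 := by
  have get : ∀ (i j : Fin 4), (i, j) ∈ Ep → pSquare j ≠ pSquare i →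
      projP (pSquare j - pSquare i) (x j - x i) = 0 := by
    intro i j he hne
    have t : (‖pSquare j - pSquare i‖⁻¹ • projP (bearing pSquare i j) (x j - x i) :
        EuclideanSpace ℝ (Fin 2)) = 0 := congrFun hR ⟨(i, j), he⟩
    rw [projP_bearing _ _ _ hne] at t
    rcases smul_eq_zero.mp t with h | h
    · exact absurd h (inv_ne_zero (norm_ne_zero_iff.mpr (sub_ne_zero.mpr hne)))
    · exact h
  have t01 := get 0 1 (by decide) ne01
  have t03 := get 0 3 (by decide) ne03
  have t12 := get 1 2 (by decide) ne12
  have t13 := get 1 3 (by decide) ne13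
  have t23 := get 2 3 (by decide) ne23
  funext i
  fin_cases i
  · show LB Ep pSquare x 0 = 0
    rw [LB_ap0, ← neg_sub (x 1) (x 0), map_neg, t01, ← neg_sub (x 3) (x 0), map_neg, t03]
    simp
  · show LB Ep pSquare x 1 = 0
    rw [LB_ap1, ← neg_sub (x 2) (x 1), map_neg, t12, ← neg_sub (x 3) (x 1), map_neg, t13]
    simp
  · show LB Ep pSquare x 2 = 0
    rw [LB_ap2, ← neg_sub (x 3) (x 2), map_neg, t23]
    simp
  · exact LB_ap3 x

/-- For the square formation with directed edges `{(1,4),(1,2),(2,3),(2,4),(3,4)}`,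
`Null(L_B) = span{𝟏 ⊗ I_2, p}`; in particular the formation is both
infinitesimally bearing rigid and bearing persistent. -/
theorem stmt16 :
    (LinearMap.ker (LB Ep pSquare) : Set (Fin 4 → EuclideanSpace ℝ (Fin 2))) =
      transScale pSquare ∧
    (LinearMap.ker (RB Ep pSquare) : Set (Fin 4 → EuclideanSpace ℝ (Fin 2))) =
      transScale pSquare ∧
    LinearMap.ker (LB Ep pSquare) = LinearMap.ker (RB Ep pSquare) := by
  have hLK : ∀ x, LB Ep pSquare x = 0 ↔ x ∈ transScale pSquare :=
    fun x => ⟨dirA x, fun h => dirC x (dirB x h)⟩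
  have hRK : ∀ x, RB Ep pSquare x = 0 ↔ x ∈ transScale pSquare :=
    fun x => ⟨fun h => dirA x (dirC x h), dirB x⟩
  refine ⟨?_, ?_, ?_⟩
  · ext x
    simpa [LinearMap.mem_ker] using hLK x
  · ext x
    simpa [LinearMap.mem_ker] using hRK x
  · ext x
    rw [LinearMap.mem_ker, LinearMap.mem_ker, hLK x, hRK x]
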